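/- arXiv:2303.08218 — 2 statements merged into one kernel-verified Lean document; each statement's English description precedes it below -/
import Mathlib

section
/- Under the same assumptions (Z_1 ⊥ Z_2, full ignorability, positivity, consistency), the interference effect ι_1(π) for π = P(Z_1 = 1), defined as ι_1(π) = E[π(Y_1(1,1)-Y_1(1,0)) + (1-π)(Y_1(0,1)-Y_1(0,0))], is identified by ι_1(π) = E[Y_1 | Z_2 = 1] - E[Y_1 | Z_2 = 0]. -/
open MeasureTheory ProbabilityTheory

lemma key_setIntegral {Ω : Type*} [MeasurableSpace Ω] (μ : Measure Ω) [IsProbabilityMeasure μ]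
    (Y : Bool → Bool → Ω → ℝ) (Z1 Z2 : Ω → Bool)
    (hYmeas : ∀ a b, Measurable (Y a b))
    (hYint : ∀ a b, Integrable (Y a b) μ)
    (hZ1 : Measurable Z1) (hZ2 : Measurable Z2)
    (hign : IndepFun (fun ω => (Z1 ω, Z2 ω))
      (fun ω => fun p : Bool × Bool => Y p.1 p.2 ω) μ)
    (a b : Bool) :
    ∫ ω in {ω | Z1 ω = a ∧ Z2 ω = b}, Y a b ω ∂μ
      = (μ {ω | Z1 ω = a ∧ Z2 ω = b}).toReal * ∫ ω, Y a b ω ∂μ := by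
  set S : Set Ω := {ω | Z1 ω = a ∧ Z2 ω = b} with hS
  have hSmeas : MeasurableSet S := (hZ1 (measurableSet_singleton a)).inter (hZ2 (measurableSet_singleton b))
  have hSeq : S = (fun ω => (Z1 ω, Z2 ω)) ⁻¹' {(a, b)} := by
    ext ω; simp [hS, Prod.ext_iff]
  have hind : IndepFun (Set.indicator S (1 : Ω → ℝ)) (Y a b) μ := by
    have := hign.comp (φ := Set.indicator ({(a,b)} : Set (Bool × Bool)) (1 : Bool × Bool → ℝ))
      (ψ := fun h : Bool × Bool → ℝ => h (a, b))
      ((measurable_one).indicator (measurableSet_singleton _)) (measurable_pi_apply (X := fun _ : Bool × Bool => ℝ) (a, b))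
    convert this using 1
    ext ω
    simp only [Function.comp_apply, hSeq]
    by_cases h : (Z1 ω, Z2 ω) = (a, b) <;> simp [Set.indicator, h]
    rfl
  have hXint : Integrable (Set.indicator S (1 : Ω → ℝ)) μ :=
    (integrable_const (1:ℝ)).indicator hSmeas
  have hmul := hind.integral_mul_eq_mul_integral hXint.aestronglyMeasurable (hYint a b).aestronglyMeasurable
  have h1 : ∫ ω, Set.indicator S (1 : Ω → ℝ) ω * Y a b ω ∂μ
      = ∫ ω in S, Y a b ω ∂μ := by
    rw [← integral_indicator hSmeas]
    congr 1; ext ω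
    by_cases h : ω ∈ S <;> simp [Set.indicator, h]
  have h2 : ∫ ω, Set.indicator S (1 : Ω → ℝ) ω ∂μ = (μ S).toReal := by
    rw [integral_indicator hSmeas]; simp [measureReal_def]
  rw [← h1, ← h2]
  exact hmul

/-- Under Z₁ ⊥ Z₂, full ignorability, positivity and consistency,
the interference effect ι₁(π) for π = P(Z₁ = 1), defined as
ι₁(π) = E[π(Y₁(1,1)-Y₁(1,0)) + (1-π)(Y₁(0,1)-Y₁(0,0))], is identified by
ι₁(π) = E[Y₁ | Z₂ = 1] - E[Y₁ | Z₂ = 0]. -/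
theorem interference_effect_identification_no_confounding
    {Ω : Type*} [MeasurableSpace Ω] (μ : Measure Ω) [IsProbabilityMeasure μ]
    (Y : Bool → Bool → Ω → ℝ) (Z1 Z2 : Ω → Bool)
    (hYmeas : ∀ a b, Measurable (Y a b))
    (hYint : ∀ a b, Integrable (Y a b) μ)
    (hZ1 : Measurable Z1) (hZ2 : Measurable Z2)
    (hZindep : IndepFun Z1 Z2 μ)
    (hign : IndepFun (fun ω => (Z1 ω, Z2 ω))
      (fun ω => fun p : Bool × Bool => Y p.1 p.2 ω) μ)
    (hpos : ∀ z z' : Bool, 0 < μ {ω | Z1 ω = z ∧ Z2 ω = z'})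
    (Yobs : Ω → ℝ) (hcons : ∀ ω, Yobs ω = Y (Z1 ω) (Z2 ω) ω)
    (π : ℝ) (hπ : π = (μ {ω | Z1 ω = true}).toReal) :
    ∫ ω, (π * (Y true true ω - Y true false ω)
        + (1 - π) * (Y false true ω - Y false false ω)) ∂μ
      = (∫ ω, Yobs ω ∂(μ[|{ω | Z2 ω = true}]))
        - ∫ ω, Yobs ω ∂(μ[|{ω | Z2 ω = false}]) := by
  -- measurable sets
  have hSab : ∀ a b : Bool, MeasurableSet {ω | Z1 ω = a ∧ Z2 ω = b} := fun a b =>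
    (hZ1 (measurableSet_singleton a)).inter (hZ2 (measurableSet_singleton b))
  have hSb : ∀ b : Bool, MeasurableSet {ω | Z2 ω = b} := fun b =>
    hZ2 (measurableSet_singleton b)
  have hSa : ∀ a : Bool, MeasurableSet {ω | Z1 ω = a} := fun a =>
    hZ1 (measurableSet_singleton a)
  -- product measure
  have hprod : ∀ a b : Bool, μ {ω | Z1 ω = a ∧ Z2 ω = b}
      = μ {ω | Z1 ω = a} * μ {ω | Z2 ω = b} := by
    intro a b
    exact hZindep.measure_inter_preimage_eq_mul {a} {b}
      (measurableSet_singleton a) (measurableSet_singleton b)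
  -- key quantities
  set E : Bool → Bool → ℝ := fun a b => ∫ ω, Y a b ω ∂μ with hE
  set p : Bool → ℝ := fun a => (μ {ω | Z1 ω = a}).toReal with hp
  set m : Bool → ℝ := fun b => (μ {ω | Z2 ω = b}).toReal with hm
  have hmpos : ∀ b, 0 < m b := by
    intro b
    have h1 : μ {ω | Z1 ω = true ∧ Z2 ω = b} ≤ μ {ω | Z2 ω = b} :=
      measure_mono (fun ω hω => hω.2)
    have := lt_of_lt_of_le (hpos true b) h1
    exact ENNReal.toReal_pos this.ne' (measure_ne_top μ _)
  have hmne : ∀ b, μ {ω | Z2 ω = b} ≠ ⊤ := fun b => measure_ne_top μ _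
  -- split conditional expectation
  have hcond : ∀ b : Bool, ∫ ω, Yobs ω ∂(μ[|{ω | Z2 ω = b}])
      = p true * E true b + p false * E false b := by
    intro b
    -- set decomposition
    have hunion : {ω | Z2 ω = b}
        = {ω | Z1 ω = true ∧ Z2 ω = b} ∪ {ω | Z1 ω = false ∧ Z2 ω = b} := by
      ext ω
      rcases Bool.dichotomy (Z1 ω) with h | h <;> simp [h]
    have hdisj : Disjoint {ω | Z1 ω = true ∧ Z2 ω = b} {ω | Z1 ω = false ∧ Z2 ω = b} := by
      rw [Set.disjoint_left]
      rintro ω ⟨h1, _⟩ ⟨h2, _⟩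
      simp [h1] at h2
    -- Yobs agrees with Y a b on each piece
    have heqon : ∀ a : Bool, Set.EqOn Yobs (Y a b) {ω | Z1 ω = a ∧ Z2 ω = b} := by
      intro a ω hω
      rw [hcons ω, hω.1, hω.2]
    have hion : ∀ a : Bool, IntegrableOn Yobs {ω | Z1 ω = a ∧ Z2 ω = b} μ := by
      intro a
      exact (((hYint a b).integrableOn).congr_fun (fun ω hω => ((heqon a) hω).symm)
        (hSab a b))
    have hpiece : ∀ a : Bool, ∫ ω in {ω | Z1 ω = a ∧ Z2 ω = b}, Yobs ω ∂μ
        = p a * m b * E a b := by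
      intro a
      rw [setIntegral_congr_fun (hSab a b) (heqon a),
        key_setIntegral μ Y Z1 Z2 hYmeas hYint hZ1 hZ2 hign a b, hprod a b]
      rw [ENNReal.toReal_mul]
    have hsplit : ∫ ω in {ω | Z2 ω = b}, Yobs ω ∂μ
        = p true * m b * E true b + p false * m b * E false b := by
      rw [hunion, setIntegral_union hdisj (hSab false b) (hion true) (hion false),
        hpiece true, hpiece false]
    rw [ProbabilityTheory.cond, integral_smul_measure, smul_eq_mul, hsplit,
      ENNReal.toReal_inv]
    rw [show (μ {ω | Z2 ω = b}).toReal = m b from rfl]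
    field_simp [(hmpos b).ne']
  -- left-hand side
  have hπ' : π = p true := hπ
  have hπc : 1 - π = p false := by
    have hcompl : ({ω | Z1 ω = false} : Set Ω) = {ω | Z1 ω = true}ᶜ := by
      ext ω; rcases Bool.dichotomy (Z1 ω) with h | h <;> simp [h]
    have := measure_compl (hSa true) (measure_ne_top μ _)
    rw [hp]
    simp only [hcompl, this, measure_univ]
    rw [ENNReal.toReal_sub_of_le (prob_le_one) (by simp)]
    simp [hπ]
  have hLHS : ∫ ω, (π * (Y true true ω - Y true false ω)
        + (1 - π) * (Y false true ω - Y false false ω)) ∂μ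
      = π * (E true true - E true false) + (1 - π) * (E false true - E false false) := by
    have h1 : Integrable (fun ω => π * (Y true true ω - Y true false ω)) μ :=
      ((hYint true true).sub (hYint true false)).const_mul π
    have h2 : Integrable (fun ω => (1 - π) * (Y false true ω - Y false false ω)) μ :=
      ((hYint false true).sub (hYint false false)).const_mul (1 - π)
    rw [integral_add h1 h2, integral_const_mul, integral_const_mul,
      integral_sub (hYint true true) (hYint true false),
      integral_sub (hYint false true) (hYint false false)]
  rw [hLHS, hcond true, hcond false, ← hπ', ← hπc]
  ring
end

section
/- Assume (i) conditional ignorability: (Z_1, Z_2) ⊥ Y_1(z_1, z_2) | U_1 for all z_1, z_2; (ii) conditional treatment independence: Z_1 ⊥ Z_2 | U_1; (iii) positivity: P(Z_1 = z_1, Z_2 = z_2 | U_1) > 0 almost surely; (iv) consistency Y_1 = Y_1(Z_1, Z_2). Define π(u) = P(Z_2 = 1 | U_1 = u) and the conditional local effect λ_1(π(u); u) = π(u)·E[Y_1(1,1) - Y_1(0,1) | U_1 = u] + (1-π(u))·E[Y_1(1,0) - Y_1(0,0) | U_1 = u]. Then E_{U_1}[λ_1(π(U_1); U_1)] = E_{U_1}[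 E(Y_1 | Z_1 = 1, U_1) - E(Y_1 | Z_1 = 0, U_1) ]. -/
open MeasureTheory ProbabilityTheory


lemma indep_setOf_integral {Ω : Type*} [MeasurableSpace Ω] {ν : Measure Ω}
    [IsProbabilityMeasure ν]
    {β γ : Type*} [MeasurableSpace β] [MeasurableSingletonClass β] [MeasurableSpace γ]
    {W : Ω → β} {V : Ω → γ} (hind : IndepFun W V ν) (hW : Measurable W)
    (b : β) {φ : γ → ℝ} (hφ : Measurable φ) (hint : Integrable (fun ω => φ (V ω)) ν) :
    ∫ ω in {ω | W ω = b}, φ (V ω) ∂ν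
      = (ν {ω | W ω = b}).toReal * ∫ ω, φ (V ω) ∂ν := by
  have hmeas : MeasurableSet {ω | W ω = b} := hW (measurableSet_singleton b)
  set I : β → ℝ := Set.indicator ({b} : Set β) (fun _ => (1:ℝ)) with hIdef
  have hIm : Measurable I := measurable_const.indicator (measurableSet_singleton b)
  have hcomp : IndepFun (I ∘ W) (φ ∘ V) ν := hind.comp hIm hφ
  have hIW : I ∘ W = Set.indicator {ω | W ω = b} (fun _ => (1:ℝ)) := by
    funext ω
    by_cases h : W ω = b <;> simp [hIdef, Set.indicator, h]
  have hIint : Integrable (I ∘ W) ν := by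
    rw [hIW]; exact (integrable_const (1:ℝ)).indicator hmeas
  have hmul := hcomp.integral_mul_eq_mul_integral hIint.aestronglyMeasurable hint.aestronglyMeasurable
  have h1 : (I ∘ W) * (φ ∘ V) = Set.indicator {ω | W ω = b} (fun ω => φ (V ω)) := by
    funext ω
    by_cases h : W ω = b <;> simp [hIdef, Set.indicator, h]
  have h2 : integral ν ((I ∘ W) * (φ ∘ V)) = ∫ ω in {ω | W ω = b}, φ (V ω) ∂ν := by
    rw [h1, integral_indicator hmeas]
  have h3 : integral ν (I ∘ W) = (ν {ω | W ω = b}).toReal := by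
    calc integral ν (I ∘ W) = ∫ _ in {ω | W ω = b}, (1:ℝ) ∂ν := by
          rw [hIW, integral_indicator hmeas]
      _ = (ν {ω | W ω = b}).toReal := by simp [Measure.real]
  rw [h2, h3] at hmul
  exact hmul

/-- Under (i) conditional ignorability given U₁, (ii) Z₁ ⊥ Z₂ | U₁,
(iii) positivity and (iv) consistency, the expected conditional local effect satisfies
E_{U₁}[λ₁(π(U₁); U₁)] = E_{U₁}[E(Y₁ | Z₁ = 1, U₁) - E(Y₁ | Z₁ = 0, U₁)],
where π(u) = P(Z₂ = 1 | U₁ = u) and U₁ takes finitely many values. -/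
theorem conditional_local_effect_identification
    {Ω : Type*} [MeasurableSpace Ω] (μ : Measure Ω) [IsProbabilityMeasure μ]
    {α : Type*} [Fintype α] [MeasurableSpace α] [MeasurableSingletonClass α]
    (Y : Bool → Bool → Ω → ℝ) (Z1 Z2 : Ω → Bool) (U1 : Ω → α)
    (hYmeas : ∀ a b, Measurable (Y a b))
    (hYint : ∀ a b, Integrable (Y a b) μ)
    (hZ1 : Measurable Z1) (hZ2 : Measurable Z2) (hU1 : Measurable U1)
    -- (i) conditional ignorability: (Z₁, Z₂) ⊥ Y₁(z₁,z₂) | U₁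
    (hign : ∀ u : α, 0 < μ {ω | U1 ω = u} →
      IndepFun (fun ω => (Z1 ω, Z2 ω))
        (fun ω => fun p : Bool × Bool => Y p.1 p.2 ω) (μ[|{ω | U1 ω = u}]))
    -- (ii) conditional treatment independence: Z₁ ⊥ Z₂ | U₁
    (hZindep : ∀ u : α, 0 < μ {ω | U1 ω = u} →
      IndepFun Z1 Z2 (μ[|{ω | U1 ω = u}]))
    -- (iii) positivity
    (hpos : ∀ u : α, 0 < μ {ω | U1 ω = u} → ∀ z1 z2 : Bool,
      0 < (μ[|{ω | U1 ω = u}]) {ω | Z1 ω = z1 ∧ Z2 ω = z2})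
    -- (iv) consistency
    (Yobs : Ω → ℝ) (hcons : ∀ ω, Yobs ω = Y (Z1 ω) (Z2 ω) ω) :
    ∑ u : α, (μ {ω | U1 ω = u}).toReal *
      (((μ[|{ω | U1 ω = u}]) {ω | Z2 ω = true}).toReal
          * ∫ ω, (Y true true ω - Y false true ω) ∂(μ[|{ω | U1 ω = u}])
        + (1 - ((μ[|{ω | U1 ω = u}]) {ω | Z2 ω = true}).toReal)
          * ∫ ω, (Y true false ω - Y false false ω) ∂(μ[|{ω | U1 ω = u}]))
    = ∑ u : α, (μ {ω | U1 ω = u}).toReal *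
        ((∫ ω, Yobs ω ∂(μ[|{ω | Z1 ω = true ∧ U1 ω = u}]))
          - ∫ ω, Yobs ω ∂(μ[|{ω | Z1 ω = false ∧ U1 ω = u}])) := by
  apply Finset.sum_congr rfl
  intro u _
  rcases eq_or_lt_of_le (zero_le : 0 ≤ μ {ω | U1 ω = u}) with h0 | hu
  · simp [← h0]
  congr 1
  set s : Set Ω := {ω | U1 ω = u} with hsdef
  have hs : MeasurableSet s := hU1 (measurableSet_singleton u)
  have hne : μ s ≠ 0 := hu.ne'
  set ν : Measure Ω := μ[|s] with hνdef
  haveI hνprob : IsProbabilityMeasure ν := cond_isProbabilityMeasure hne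
  have hνeq : ν = (μ s)⁻¹ • μ.restrict s := rfl
  have hYint' : ∀ a b, Integrable (Y a b) ν := by
    intro a b
    rw [hνeq]
    exact ((hYint a b).restrict).smul_measure (ENNReal.inv_ne_top.2 hne)
  -- measurable sets
  have hSz : ∀ z : Bool, MeasurableSet {ω | Z1 ω = z} :=
    fun z => hZ1 (measurableSet_singleton z)
  have hm : ∀ z1 z2 : Bool, MeasurableSet {ω | Z1 ω = z1 ∧ Z2 ω = z2} := fun z1 z2 =>
    (hZ1 (measurableSet_singleton z1)).inter (hZ2 (measurableSet_singleton z2))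
  -- key: factorization of set integrals via ignorability
  have key : ∀ z1 z2 za zb : Bool,
      ∫ ω in {ω | Z1 ω = z1 ∧ Z2 ω = z2}, Y za zb ω ∂ν
        = (ν {ω | Z1 ω = z1 ∧ Z2 ω = z2}).toReal * ∫ ω, Y za zb ω ∂ν := by
    intro z1 z2 za zb
    have hseteq : {ω | (fun ω => (Z1 ω, Z2 ω)) ω = (z1, z2)}
        = {ω | Z1 ω = z1 ∧ Z2 ω = z2} := by
      ext ω; simp [Prod.ext_iff]
    have h := indep_setOf_integral (hign u hu) (hZ1.prodMk hZ2) (z1, z2)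
      (φ := fun v : Bool × Bool → ℝ => v (za, zb)) (measurable_pi_apply _) (hYint' za zb)
    rw [hseteq] at h
    exact h
  -- factorization of joint probabilities
  have hprod : ∀ z1 z2 : Bool, ν {ω | Z1 ω = z1 ∧ Z2 ω = z2}
      = ν {ω | Z1 ω = z1} * ν {ω | Z2 ω = z2} := by
    intro z1 z2
    have h := (hZindep u hu).measure_inter_preimage_eq_mul
      ({z1} : Set Bool) ({z2} : Set Bool)
      (measurableSet_singleton z1) (measurableSet_singleton z2)
    have e : Z1 ⁻¹' {z1} ∩ Z2 ⁻¹' {z2} = {ω | Z1 ω = z1 ∧ Z2 ω = z2} := by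
      ext ω; simp [Set.mem_inter_iff]
    rw [e] at h
    exact h
  set π : ℝ := (ν {ω | Z2 ω = true}).toReal with hπdef
  have hπf : (ν {ω | Z2 ω = false}).toReal = 1 - π := by
    have hc : {ω | Z2 ω = false} = {ω | Z2 ω = true}ᶜ := by
      ext ω; cases h : Z2 ω <;> simp [h]
    have hmt : MeasurableSet {ω | Z2 ω = true} := hZ2 (measurableSet_singleton true)
    rw [hc, prob_compl_eq_one_sub hmt,
      ENNReal.toReal_sub_of_le prob_le_one ENNReal.one_ne_top, ENNReal.toReal_one]
  have hq : ∀ z : Bool, (ν {ω | Z1 ω = z}).toReal ≠ 0 := by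
    intro z
    have hsub : {ω | Z1 ω = z ∧ Z2 ω = true} ⊆ {ω | Z1 ω = z} := fun ω h => h.1
    have hpos' : 0 < ν {ω | Z1 ω = z} :=
      lt_of_lt_of_le (hpos u hu z true) (measure_mono hsub)
    exact ENNReal.toReal_ne_zero.2 ⟨hpos'.ne', measure_ne_top ν _⟩
  have hA : (μ s).toReal ≠ 0 :=
    ENNReal.toReal_ne_zero.2 ⟨hne, measure_ne_top μ s⟩
  -- observed side
  have hR : ∀ z : Bool, ∫ ω, Yobs ω ∂(μ[|{ω | Z1 ω = z ∧ U1 ω = u}])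
      = π * ∫ ω, Y z true ω ∂ν + (1 - π) * ∫ ω, Y z false ω ∂ν := by
    intro z
    have hTset : {ω | Z1 ω = z ∧ U1 ω = u} = {ω | Z1 ω = z} ∩ s := by
      ext ω; exact Iff.rfl
    -- split the ν-integral of Yobs over {Z1 = z}
    have hIntOn : ∀ b : Bool, IntegrableOn Yobs {ω | Z1 ω = z ∧ Z2 ω = b} ν := by
      intro b
      refine (Integrable.congr ((hYint' z b).integrableOn) ?_)
      refine ((ae_restrict_iff' (hm z b)).2 (ae_of_all _ ?_))
      intro ω hω
      rw [hcons ω, hω.1, hω.2]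
    have hsplit : ∫ ω in {ω | Z1 ω = z}, Yobs ω ∂ν
        = (ν {ω | Z1 ω = z}).toReal * π * ∫ ω, Y z true ω ∂ν
          + (ν {ω | Z1 ω = z}).toReal * (1 - π) * ∫ ω, Y z false ω ∂ν := by
      have hU : {ω | Z1 ω = z}
          = {ω | Z1 ω = z ∧ Z2 ω = true} ∪ {ω | Z1 ω = z ∧ Z2 ω = false} := by
        ext ω; cases h : Z2 ω <;> simp [h]
      have hd : Disjoint {ω | Z1 ω = z ∧ Z2 ω = true} {ω | Z1 ω = z ∧ Z2 ω = false} := by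
        rw [Set.disjoint_left]
        rintro ω ⟨_, h1⟩ ⟨_, h2⟩
        rw [h1] at h2; exact Bool.noConfusion h2
      have hce : ∀ b : Bool, ∫ ω in {ω | Z1 ω = z ∧ Z2 ω = b}, Yobs ω ∂ν
          = ∫ ω in {ω | Z1 ω = z ∧ Z2 ω = b}, Y z b ω ∂ν := by
        intro b
        refine setIntegral_congr_fun (hm z b) ?_
        intro ω hω
        rw [hcons ω, hω.1, hω.2]
      calc ∫ ω in {ω | Z1 ω = z}, Yobs ω ∂ν
          = ∫ ω in {ω | Z1 ω = z ∧ Z2 ω = true}, Yobs ω ∂ν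
            + ∫ ω in {ω | Z1 ω = z ∧ Z2 ω = false}, Yobs ω ∂ν := by
            rw [hU]
            exact setIntegral_union hd (hm z false) (hIntOn true) (hIntOn false)
        _ = (ν {ω | Z1 ω = z}).toReal * π * ∫ ω, Y z true ω ∂ν
            + (ν {ω | Z1 ω = z}).toReal * (1 - π) * ∫ ω, Y z false ω ∂ν := by
            rw [hce true, hce false, key z true z true, key z false z false,
              hprod z true, hprod z false, ENNReal.toReal_mul, ENNReal.toReal_mul,
              hπf, ← hπdef]
    -- relate the conditional expectations
    have hcond : ∫ ω, Yobs ω ∂(μ[|{ω | Z1 ω = z ∧ U1 ω = u}])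
        = ((μ ({ω | Z1 ω = z} ∩ s)).toReal)⁻¹ * ∫ ω in {ω | Z1 ω = z} ∩ s, Yobs ω ∂μ := by
      rw [hTset]
      have : μ[|{ω | Z1 ω = z} ∩ s] = (μ ({ω | Z1 ω = z} ∩ s))⁻¹
          • μ.restrict ({ω | Z1 ω = z} ∩ s) := rfl
      rw [this, integral_smul_measure, smul_eq_mul, ENNReal.toReal_inv]
    have hrest : ∫ ω in {ω | Z1 ω = z}, Yobs ω ∂ν
        = ((μ s).toReal)⁻¹ * ∫ ω in {ω | Z1 ω = z} ∩ s, Yobs ω ∂μ := by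
      rw [hνeq, Measure.restrict_smul, integral_smul_measure, smul_eq_mul,
        ENNReal.toReal_inv, Measure.restrict_restrict (hSz z)]
    have hmes : (ν {ω | Z1 ω = z}).toReal
        = ((μ s).toReal)⁻¹ * (μ ({ω | Z1 ω = z} ∩ s)).toReal := by
      rw [hνdef, cond_apply hs, ENNReal.toReal_mul, ENNReal.toReal_inv, Set.inter_comm]
    set q : ℝ := (ν {ω | Z1 ω = z}).toReal with hqdef
    set A : ℝ := (μ s).toReal with hAdef
    set B : ℝ := (μ ({ω | Z1 ω = z} ∩ s)).toReal with hBdef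
    set J : ℝ := ∫ ω in {ω | Z1 ω = z} ∩ s, Yobs ω ∂μ with hJdef
    have hB : B ≠ 0 := by
      intro h
      exact hq z (by rw [← hqdef, hmes, h, mul_zero])
    rw [hcond]
    rw [hrest, hmes] at hsplit
    field_simp at hsplit ⊢
    nlinarith [hsplit]
  -- conclude
  rw [integral_sub (hYint' true true) (hYint' false true),
    integral_sub (hYint' true false) (hYint' false false), hR true, hR false]
  ring
end
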